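/- Let X be a real random variable with cdf F_X and quantile function Q⁻, and let u ∈ (0,1]. Define Xᵘ = Q⁻(V) where V is uniformly distributed on [0,u]. Then the cdf of Xᵘ satisfies F_{Xᵘ}(x) = F_X(x)/u for all x < Q⁻(u), and F_{Xᵘ}(x) = 1 for all x ≥ Q⁻(u). -/

import Mathlib

open Set MeasureTheory

/-- Lower generalized quantile function, valued in the extended reals. -/
noncomputable def Qminus (F : ℝ → ℝ) (u : ℝ) : EReal :=
  sInf ((fun x : ℝ => (x : EReal)) '' {x | u ≤ F x})

lemma qminus_galois (μ : Measure ℝ) [IsProbabilityMeasure μ]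
    (F : ℝ → ℝ) (hF : ∀ x, F x = (μ (Iic x)).toReal) (v x : ℝ) :
    Qminus F v ≤ (x : EReal) ↔ v ≤ F x := by
  have hFe : F = ProbabilityTheory.cdf μ := by
    funext y; rw [hF, ProbabilityTheory.cdf_eq_real, measureReal_def]
  have hmono : Monotone F := hFe ▸ (ProbabilityTheory.cdf μ).mono
  constructor
  · intro h
    by_contra hv
    push_neg at hv
    -- right continuity gives y > x with F y < v
    have hrc : ContinuousWithinAt F (Set.Ici x) x := by
      rw [hFe]; exact (ProbabilityTheory.cdf μ).right_continuous x
    have hrc' : Filter.Tendsto F (nhdsWithin x (Set.Ioi x)) (nhds (F x)) :=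
      hrc.mono_left (nhdsWithin_mono x Set.Ioi_subset_Ici_self)
    have hev : ∀ᶠ y in nhdsWithin x (Set.Ioi x), F y < v :=
      hrc'.eventually_lt_const hv
    obtain ⟨y, hyFv, hxy⟩ := (hev.and (eventually_mem_nhdsWithin)).exists
    -- y is a lower bound of the set
    have hyle : (y : EReal) ≤ Qminus F v := by
      apply le_sInf
      rintro _ ⟨z, hz, rfl⟩
      have : y < z := by
        by_contra hzy
        push_neg at hzy
        exact absurd hz (not_le.2 (lt_of_le_of_lt (hmono hzy) hyFv))
      show (y:EReal) ≤ (z:EReal); exact_mod_cast this.le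
    have : (y : EReal) ≤ (x : EReal) := hyle.trans h
    exact absurd (EReal.coe_le_coe_iff.1 this) (not_le.2 hxy)
  · intro h
    exact sInf_le ⟨x, h, rfl⟩

theorem truncated_quantile_cdf (μ : Measure ℝ) [IsProbabilityMeasure μ]
    (F : ℝ → ℝ) (hF : ∀ x, F x = (μ (Iic x)).toReal)
    (u : ℝ) (hu : u ∈ Ioc (0:ℝ) 1) :
    (∀ x : ℝ, (x : EReal) < Qminus F u →
      ((ENNReal.ofReal u)⁻¹
        * volume {v : ℝ | v ∈ Icc (0:ℝ) u ∧ Qminus F v ≤ (x : EReal)}).toReal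
        = F x / u) ∧
    (∀ x : ℝ, Qminus F u ≤ (x : EReal) →
      (ENNReal.ofReal u)⁻¹
        * volume {v : ℝ | v ∈ Icc (0:ℝ) u ∧ Qminus F v ≤ (x : EReal)} = 1) := by
  obtain ⟨hu0, hu1⟩ := hu
  have hFnn : ∀ x, 0 ≤ F x := fun x => (hF x) ▸ ENNReal.toReal_nonneg
  have hset : ∀ x : ℝ, {v : ℝ | v ∈ Icc (0:ℝ) u ∧ Qminus F v ≤ (x : EReal)}
      = Icc (0:ℝ) (min u (F x)) := by
    intro x
    ext v
    simp only [mem_setOf_eq, mem_Icc, qminus_galois μ F hF v x, le_min_iff]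
    tauto
  have hune : ENNReal.ofReal u ≠ 0 := by
    simp [ENNReal.ofReal_eq_zero, not_le, hu0]
  constructor
  · intro x hx
    have hFu : F x < u := by
      by_contra h
      push_neg at h
      exact absurd ((qminus_galois μ F hF u x).2 h) (not_le.2 hx)
    rw [hset, min_eq_right hFu.le, Real.volume_Icc]
    rw [ENNReal.toReal_mul, ENNReal.toReal_inv, ENNReal.toReal_ofReal hu0.le,
      ENNReal.toReal_ofReal (by linarith [hFnn x])]
    ring
  · intro x hx
    have hFu : u ≤ F x := (qminus_galois μ F hF u x).1 hx
    rw [hset, min_eq_left hFu, Real.volume_Icc]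
    simp only [sub_zero]
    exact ENNReal.inv_mul_cancel hune ENNReal.ofReal_ne_top
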